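/- arXiv:1411.1252 — 3 statements merged into one kernel-verified Lean document; each statement's English description precedes it below -/
import Mathlib

section
/- Let H be a separable complex Hilbert space, Γ a countable discrete abelian group, π a unitary representation of Γ on H, α : Γ → Γ a group homomorphism, and δ a unitary operator on H satisfying δ⁻¹ π(γ) δ = π(α(γ)) for all γ ∈ Γ. Let ψ ∈ H. If the affine system (δ^j π(γ) ψ) indexed by (j,γ) ∈ ℤ × Γ is a Parseval frame for H, then for every integer k ≥ 0 the subspace V_k = closed linear span of {δ^j π(γ) ψ : j < k, γ ∈ Γ} is π-invariant. -/
noncomputable section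

/-- The action of a unitary operator on a Hilbert space vector. -/
def uact {H : Type*} [NormedAddCommGroup H] [InnerProductSpace ℂ H] [CompleteSpace H]
    (u : unitary (H →L[ℂ] H)) (x : H) : H := (u : H →L[ℂ] H) x

section aux

variable {H : Type*} [NormedAddCommGroup H] [InnerProductSpace ℂ H] [CompleteSpace H]

lemma uact_mul (u v : unitary (H →L[ℂ] H)) (x : H) :
    uact u (uact v x) = uact (u * v) x := by
  simp [uact]

lemma uact_norm (u : unitary (H →L[ℂ] H)) (x : H) : ‖uact u x‖ = ‖x‖ :=
  Unitary.norm_map u x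

lemma uact_inner_left (u : unitary (H →L[ℂ] H)) (x y : H) :
    (inner ℂ (uact u x) y : ℂ) = inner ℂ x (uact u⁻¹ y) := by
  have h : ((u⁻¹ : unitary (H →L[ℂ] H)) : H →L[ℂ] H)
      = ContinuousLinearMap.adjoint (u : H →L[ℂ] H) := by
    rw [← ContinuousLinearMap.star_eq_adjoint]
    rfl
  rw [uact, uact, h, ContinuousLinearMap.adjoint_inner_right]

end aux

/-- if the affine system is a Parseval frame, then for every `k ≥ 0` the space
`V_k` spanned by the dilates of order `< k` is `π`-invariant. -/
theorem stmt2
    {H : Type*} [NormedAddCommGroup H] [InnerProductSpace ℂ H] [CompleteSpace H]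
    [TopologicalSpace.SeparableSpace H]
    {Γ : Type*} [CommGroup Γ] [Countable Γ]
    (π : Γ →* unitary (H →L[ℂ] H))
    (α : Γ →* Γ)
    (δ : unitary (H →L[ℂ] H))
    (hcompat : ∀ γ : Γ, δ⁻¹ * (π γ) * δ = π (α γ))
    (ψ : H)
    (hframe : ∀ f : H,
      ∑' p : ℤ × Γ, ‖(inner ℂ f (uact (δ ^ p.1) (uact (π p.2) ψ)) : ℂ)‖ ^ 2 = ‖f‖ ^ 2) :
    ∀ k : ℤ, 0 ≤ k → ∀ γ : Γ,
      ∀ v ∈ (Submodule.span ℂ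
        {x : H | ∃ j : ℤ, j < k ∧ ∃ γ' : Γ, x = uact (δ ^ j) (uact (π γ') ψ)}).topologicalClosure,
      uact (π γ) v ∈ (Submodule.span ℂ
        {x : H | ∃ j : ℤ, j < k ∧ ∃ γ' : Γ, x = uact (δ ^ j) (uact (π γ') ψ)}).topologicalClosure := by
  intro k hk γ v hv
  -- notation
  set e : ℤ → Γ → H := fun j γ' => uact (δ ^ j) (uact (π γ') ψ) with he
  set S : Set H := {x : H | ∃ j : ℤ, j < k ∧ ∃ γ' : Γ, x = e j γ'} with hS
  set V : Submodule ℂ H := Submodule.span ℂ S with hV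
  -- basic commutation : π γ₀ * δ ^ n = δ ^ n * π (α^[n] γ₀)
  have hcomm : ∀ (n : ℕ) (γ₀ : Γ), π γ₀ * δ ^ n = δ ^ n * π (α^[n] γ₀) := by
    intro n
    induction n with
    | zero => intro γ₀; simp
    | succ n ih =>
      intro γ₀
      have h1 : π (α^[n] γ₀) * δ = δ * π (α (α^[n] γ₀)) := by
        have h2 := hcompat (α^[n] γ₀)
        calc π (α^[n] γ₀) * δ = δ * (δ⁻¹ * π (α^[n] γ₀) * δ) := by group
          _ = δ * π (α (α^[n] γ₀)) := by rw [h2]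
      calc π γ₀ * δ ^ (n+1) = (π γ₀ * δ ^ n) * δ := by rw [pow_succ]; group
        _ = δ ^ n * (π (α^[n] γ₀) * δ) := by rw [ih]; group
        _ = δ ^ n * (δ * π (α (α^[n] γ₀))) := by rw [h1]
        _ = δ ^ (n+1) * π (α^[n+1] γ₀) := by
            rw [Function.iterate_succ_apply', pow_succ]; group
  have hiter_inv : ∀ (n : ℕ) (x : Γ), α^[n] x⁻¹ = (α^[n] x)⁻¹ := by
    intro n
    induction n with
    | zero => intro x; simp
    | succ n ih =>
      intro x
      rw [Function.iterate_succ_apply, map_inv, ih, ← Function.iterate_succ_apply]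
  -- THE CORE CLAIM: Vᗮ is invariant under every π γ₀.
  have core : ∀ (γ₀ : Γ) (u : H), (∀ j : ℤ, j < k → ∀ γ' : Γ, (inner ℂ u (e j γ') : ℂ) = 0) →
      ∀ j : ℤ, j < k → ∀ γ' : Γ, (inner ℂ (uact (π γ₀) u) (e j γ') : ℂ) = 0 := by
    intro γ₀ u hu
    set g : H := uact (π γ₀) u with hg
    set s : ℤ × Γ → ℝ := fun p => ‖(inner ℂ u (e p.1 p.2) : ℂ)‖ ^ 2 with hsdef
    set t : ℤ × Γ → ℝ := fun p => ‖(inner ℂ g (e p.1 p.2) : ℂ)‖ ^ 2 with htdef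
    have hs : ∑' p, s p = ‖u‖ ^ 2 := hframe u
    have hgnorm : ‖g‖ = ‖u‖ := uact_norm _ _
    have ht : ∑' p, t p = ‖u‖ ^ 2 := by rw [← hgnorm]; exact hframe g
    -- analysis of the degenerate case u = 0
    have hzero : u = 0 → ∀ j : ℤ, j < k → ∀ γ' : Γ, (inner ℂ g (e j γ') : ℂ) = 0 := by
      intro hu0 j hj γ'
      rw [hg, hu0]
      simp [uact]
    -- the shear equivalence
    set c : ℤ → Γ := fun j => α^[j.toNat] γ₀ with hc
    set σ : ℤ × Γ ≃ ℤ × Γ :=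
      Equiv.prodShear (Equiv.refl ℤ) (fun j => Equiv.mulLeft (c j)) with hσ
    have hσ_apply : ∀ p : ℤ × Γ, σ p = (p.1, c p.1 * p.2) := fun p => rfl
    -- key pointwise identity for nonnegative j
    have hkey : ∀ p : ℤ × Γ, 0 ≤ p.1 → t (σ p) = s p := by
      rintro ⟨j, γ'⟩ hj
      have hjn : (δ : unitary (H →L[ℂ] H)) ^ j = δ ^ j.toNat := by
        rw [← zpow_natCast, Int.toNat_of_nonneg hj]
      have hinner : (inner ℂ g (e j (c j * γ')) : ℂ) = inner ℂ u (e j γ') := by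
        rw [hg, uact_inner_left, ← map_inv π γ₀]
        congr 1
        show uact (π γ₀⁻¹) (e j (c j * γ')) = e j γ'
        simp only [he]
        rw [uact_mul, uact_mul, uact_mul, hjn]
        congr 1
        rw [hcomm j.toNat γ₀⁻¹, hiter_inv, mul_assoc, ← map_mul]
        congr 2
        simp only [hc]
        exact inv_mul_cancel_left _ _
      rw [hσ_apply]
      simp only [htdef, hsdef]
      rw [hinner]
    -- pointwise vanishing of s on j < k
    have hsA : ∀ p : ℤ × Γ, p.1 < k → s p = 0 := by
      rintro ⟨j, γ'⟩ hj
      simp only [hsdef]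
      rw [hu j hj γ']
      simp
    -- handle non-summable degenerate cases
    by_cases hsumS : Summable s
    swap
    · have h0 : ‖u‖ ^ 2 = 0 := by rw [← hs, tsum_eq_zero_of_not_summable hsumS]
      exact hzero (norm_eq_zero.mp (pow_eq_zero_iff (n := 2) (by norm_num) |>.mp h0))
    by_cases hsumT : Summable t
    swap
    · have h0 : ‖u‖ ^ 2 = 0 := by rw [← ht, tsum_eq_zero_of_not_summable hsumT]
      exact hzero (norm_eq_zero.mp (pow_eq_zero_iff (n := 2) (by norm_num) |>.mp h0))
    -- the set A of indices with first coordinate < k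
    set A : Set (ℤ × Γ) := {p | p.1 < k} with hA
    have hsumT' : Summable (t ∘ σ) := (Equiv.summable_iff σ).mpr hsumT
    have htσ : ∑' p, (t ∘ σ) p = ∑' p, t p := Equiv.tsum_eq σ t
    have hsplitT : (∑' p : A, (t ∘ σ) ↑p) + ∑' p : ↑Aᶜ, (t ∘ σ) ↑p = ∑' p, (t ∘ σ) p :=
      hsumT'.tsum_subtype_add_tsum_subtype_compl A
    have hsplitS : (∑' p : A, s ↑p) + ∑' p : ↑Aᶜ, s ↑p = ∑' p, s p :=
      hsumS.tsum_subtype_add_tsum_subtype_compl A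
    have hsA0 : ∑' p : A, s ↑p = 0 := by
      have hz : ∀ p : A, s ↑p = 0 := fun p => hsA p p.2
      rw [tsum_congr hz, tsum_zero]
    have hBeq : ∑' p : ↑Aᶜ, (t ∘ σ) ↑p = ∑' p : ↑Aᶜ, s ↑p := by
      refine tsum_congr fun p => ?_
      have hp : ¬ ((p : ℤ × Γ).1 < k) := p.2
      exact hkey p (by omega)
    have hAT0 : ∑' p : A, (t ∘ σ) ↑p = 0 := by
      have := hsplitT
      rw [hBeq, htσ, ht] at this
      have h2 := hsplitS
      rw [hsA0, hs, zero_add] at h2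
      linarith
    -- conclude termwise vanishing
    intro j hj γ'
    have hq : ((j, (c j)⁻¹ * γ') : ℤ × Γ) ∈ A := hj
    have hterm : (t ∘ σ) (⟨(j, (c j)⁻¹ * γ'), hq⟩ : A) ≤ 0 := by
      rw [← hAT0]
      exact Summable.le_tsum (hsumT'.subtype A) _ (fun q _ => by
        simp only [htdef, Function.comp_apply]
        positivity)
    have hterm' : t (σ (j, (c j)⁻¹ * γ')) = 0 := by
      have hnn : 0 ≤ (t ∘ σ) (⟨(j, (c j)⁻¹ * γ'), hq⟩ : A) := by
        simp only [htdef, Function.comp_apply]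
        positivity
      exact le_antisymm hterm hnn
    have hσq : σ ((j, (c j)⁻¹ * γ') : ℤ × Γ) = (j, γ') := by
      rw [hσ_apply]
      simp
    rw [hσq] at hterm'
    simp only [htdef] at hterm'
    have := pow_eq_zero_iff (n := 2) (by norm_num) |>.mp hterm'
    exact norm_eq_zero.mp this
  -- FINISH: pass from invariance of Vᗮ to invariance of the closure of V.
  rw [← Submodule.orthogonal_orthogonal_eq_closure] at hv ⊢
  rw [Submodule.mem_orthogonal]
  intro w hw
  have hw' : ∀ j : ℤ, j < k → ∀ γ' : Γ, (inner ℂ w (e j γ') : ℂ) = 0 := by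
    intro j hj γ'
    exact (Submodule.mem_orthogonal' V w).mp hw _
      (Submodule.subset_span ⟨j, hj, γ', rfl⟩)
  have hw2 : uact (π γ⁻¹) w ∈ Vᗮ := by
    rw [Submodule.mem_orthogonal']
    intro x hx
    induction hx using Submodule.span_induction with
    | mem x hxS =>
      obtain ⟨j, hj, γ', rfl⟩ := hxS
      exact core γ⁻¹ w hw' j hj γ'
    | zero => simp
    | add x y hx hy ihx ihy => rw [inner_add_right, ihx, ihy, add_zero]
    | smul a x hx ihx => rw [inner_smul_right, ihx, mul_zero]
  have : (inner ℂ w (uact (π γ) v) : ℂ) = inner ℂ (uact (π γ⁻¹) w) v := by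
    rw [uact_inner_left, map_inv, inv_inv]
  rw [this]
  exact (Submodule.mem_orthogonal (Vᗮ) v).mp hv _ hw2
end
end

section
/- Let H be a separable complex Hilbert space, Γ a countable discrete abelian group, π a unitary representation of Γ on H, and δ a unitary operator on H. Let ψ₁, …, ψ_n ∈ H be nonzero vectors and let V₀ be the closed linear span of {δ^j π(γ) ψ_i : j < 0, γ ∈ Γ, 1 ≤ i ≤ n}; let P denote the orthogonal projection of H onto V₀. Assume V₀ is π-invariant, that no ψ_i belongs to V₀, and that the family (π(γ)(I − P)ψ_i) indexed by (γ,i) ∈ Γ × {1,…,n} is linearly independent. Then the affine system (δ^j π(γ) ψ_i) indexed by (j,γ,i) ∈ ℤ × Γ × {1,…,n} is linearly independent. -/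
noncomputable section

theorem stmt4
    {H : Type*} [NormedAddCommGroup H] [InnerProductSpace ℂ H] [CompleteSpace H]
    [TopologicalSpace.SeparableSpace H]
    {Γ : Type*} [CommGroup Γ] [Countable Γ]
    (π : Γ →* unitary (H →L[ℂ] H))
    (δ : unitary (H →L[ℂ] H))
    (n : ℕ) (ψ : Fin n → H) (hψ : ∀ i, ψ i ≠ 0)
    (V₀ : Submodule ℂ H)
    (hV₀ : V₀ = (Submodule.span ℂ
      {x : H | ∃ j : ℤ, j < 0 ∧ ∃ γ : Γ, ∃ i : Fin n,
        x = uact (δ ^ j) (uact (π γ) (ψ i))}).topologicalClosure)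
    -- `P` is the orthogonal projection of `H` onto `V₀`
    (P : H →L[ℂ] H)
    (hP : ∀ x : H, P x ∈ V₀ ∧ x - P x ∈ V₀ᗮ)
    (hV₀inv : ∀ γ : Γ, ∀ v ∈ V₀, uact (π γ) v ∈ V₀)
    (hnotmem : ∀ i : Fin n, ψ i ∉ V₀)
    (hind : LinearIndependent ℂ (fun q : Γ × Fin n => uact (π q.1) (ψ q.2 - P (ψ q.2)))) :
    LinearIndependent ℂ
      (fun t : ℤ × Γ × Fin n => uact (δ ^ t.1) (uact (π t.2.1) (ψ t.2.2))) := by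
  classical
  -- unitaries preserve inner ℂ products
  have hinner : ∀ (u : unitary (H →L[ℂ] H)) (x y : H),
      inner ℂ (uact u x) (uact u y) = (inner ℂ x y : ℂ) := by
    intro u x y
    have h : (star (u : H →L[ℂ] H)) * (u : H →L[ℂ] H) = 1 := Unitary.coe_star_mul_self u
    have h2 : ContinuousLinearMap.adjoint (u : H →L[ℂ] H) ((u : H →L[ℂ] H) y) = y := by
      rw [← ContinuousLinearMap.star_eq_adjoint, ← ContinuousLinearMap.mul_apply, h,
        ContinuousLinearMap.one_apply]
    calc inner ℂ (uact u x) (uact u y)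
        = (inner ℂ x (ContinuousLinearMap.adjoint (u : H →L[ℂ] H) ((u : H →L[ℂ] H) y)) : ℂ) :=
          (ContinuousLinearMap.adjoint_inner_right _ _ _).symm
      _ = inner ℂ x y := by rw [h2]
  -- uniqueness of the orthogonal decomposition
  have huniq : ∀ x a : H, a ∈ V₀ → x - a ∈ V₀ᗮ → P x = a := by
    intro x a ha hb
    obtain ⟨h1, h2⟩ := hP x
    have hz1 : P x - a ∈ V₀ := sub_mem h1 ha
    have hz2 : P x - a ∈ V₀ᗮ := by
      have he : P x - a = (x - a) - (x - P x) := by abel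
      rw [he]; exact sub_mem hb h2
    have hz : P x - a ∈ (⊥ : Submodule ℂ H) :=
      V₀.orthogonal_disjoint.le_bot (Submodule.mem_inf.mpr ⟨hz1, hz2⟩)
    rw [Submodule.mem_bot, sub_eq_zero] at hz
    exact hz
  -- P fixes V₀
  have hPfix : ∀ v ∈ V₀, P v = v := fun v hv =>
    huniq v v hv (by simpa using zero_mem V₀ᗮ)
  -- π maps V₀ᗮ into V₀ᗮ
  have hperp : ∀ (γ : Γ) (w : H), w ∈ V₀ᗮ → uact (π γ) w ∈ V₀ᗮ := by
    intro γ w hw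
    rw [Submodule.mem_orthogonal]
    intro u hu
    have h1 : uact (π γ⁻¹) u ∈ V₀ := hV₀inv γ⁻¹ u hu
    have h2 : inner ℂ (uact (π γ⁻¹) u) w = (0 : ℂ) := hw _ h1
    have h3 : uact (π γ) (uact (π γ⁻¹) u) = u := by
      have : π γ * π γ⁻¹ = 1 := by rw [← map_mul, mul_inv_cancel, map_one]
      calc uact (π γ) (uact (π γ⁻¹) u) = uact (π γ * π γ⁻¹) u := rfl
        _ = u := by rw [this]; rfl
    calc inner ℂ u (uact (π γ) w)
        = inner ℂ (uact (π γ) (uact (π γ⁻¹) u)) (uact (π γ) w) := by rw [h3]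
      _ = inner ℂ (uact (π γ⁻¹) u) w := hinner _ _ _
      _ = 0 := h2
  -- P commutes with π
  have hPcomm : ∀ (γ : Γ) (x : H), P (uact (π γ) x) = uact (π γ) (P x) := by
    intro γ x
    apply huniq
    · exact hV₀inv γ _ (hP x).1
    · have he : uact (π γ) x - uact (π γ) (P x) = uact (π γ) (x - P x) := by
        simp [uact, map_sub]
      rw [he]; exact hperp γ _ (hP x).2
  -- generators lie in V₀
  have hgen : ∀ (j : ℤ), j < 0 → ∀ (γ : Γ) (i : Fin n),
      uact (δ ^ j) (uact (π γ) (ψ i)) ∈ V₀ := by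
    intro j hj γ i
    rw [hV₀]
    exact Submodule.le_topologicalClosure _ (Submodule.subset_span ⟨j, hj, γ, i, rfl⟩)
  -- main argument
  rw [linearIndependent_iff']
  intro s g hsum
  by_contra hcon
  push_neg at hcon
  obtain ⟨t₀, ht₀s, ht₀⟩ := hcon
  set s' : Finset (ℤ × Γ × Fin n) := s.filter (fun t => g t ≠ 0) with hs'
  have hs'ne : s'.Nonempty := ⟨t₀, Finset.mem_filter.mpr ⟨ht₀s, ht₀⟩⟩
  have hg' : ∀ t ∈ s', g t ≠ 0 := fun t ht => (Finset.mem_filter.mp ht).2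
  have hJne : (s'.image Prod.fst).Nonempty := hs'ne.image _
  set j₀ : ℤ := (s'.image Prod.fst).max' hJne with hj₀
  obtain ⟨t₁, ht₁, ht₁j⟩ := Finset.mem_image.mp ((s'.image Prod.fst).max'_mem hJne)
  have hle : ∀ t ∈ s', t.1 ≤ j₀ := fun t ht =>
    (s'.image Prod.fst).le_max' _ (Finset.mem_image_of_mem _ ht)
  -- restrict the sum to s'
  have hsum' : ∑ t ∈ s', g t • uact (δ ^ t.1) (uact (π t.2.1) (ψ t.2.2)) = 0 := by
    rw [← hsum]
    apply Finset.sum_filter_of_ne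
    intro t _ hne hzero
    exact hne (by rw [hzero, zero_smul])
  -- apply δ^(-j₀)
  have hsum2 : ∑ t ∈ s', g t • uact (δ ^ (t.1 - j₀)) (uact (π t.2.1) (ψ t.2.2)) = 0 := by
    have hU := congrArg (fun y => ((δ ^ (-j₀) : unitary (H →L[ℂ] H)) : H →L[ℂ] H) y) hsum'
    simp only [map_sum, map_smul, map_zero] at hU
    rw [← hU]
    apply Finset.sum_congr rfl
    intro t _
    congr 1
    calc uact (δ ^ (t.1 - j₀)) (uact (π t.2.1) (ψ t.2.2))
        = uact (δ ^ (-j₀) * δ ^ t.1) (uact (π t.2.1) (ψ t.2.2)) := by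
          rw [← zpow_add, neg_add_eq_sub]
      _ = _ := rfl
  -- split at j₀
  have hsplit := Finset.sum_filter_add_sum_filter_not s' (fun t => t.1 = j₀)
    (fun t => g t • uact (δ ^ (t.1 - j₀)) (uact (π t.2.1) (ψ t.2.2)))
  rw [hsum2] at hsplit
  set sF : Finset (ℤ × Γ × Fin n) := s'.filter (fun t => t.1 = j₀) with hsF
  -- the lower part is in V₀
  have hlow : ∑ t ∈ s'.filter (fun t => ¬ t.1 = j₀),
      g t • uact (δ ^ (t.1 - j₀)) (uact (π t.2.1) (ψ t.2.2)) ∈ V₀ := by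
    apply Submodule.sum_mem
    intro t ht
    obtain ⟨hts', htne⟩ := Finset.mem_filter.mp ht
    have : t.1 - j₀ < 0 := sub_neg.mpr (lt_of_le_of_ne (hle t hts') htne)
    exact Submodule.smul_mem _ _ (hgen _ this _ _)
  -- the top part
  have hTeq : ∑ t ∈ sF, g t • uact (δ ^ (t.1 - j₀)) (uact (π t.2.1) (ψ t.2.2))
      = ∑ t ∈ sF, g t • uact (π t.2.1) (ψ t.2.2) := by
    apply Finset.sum_congr rfl
    intro t ht
    have htj : t.1 = j₀ := (Finset.mem_filter.mp ht).2
    have h0 : t.1 - j₀ = 0 := by rw [htj, sub_self]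
    rw [h0, zpow_zero]
    congr 1
  set T : H := ∑ t ∈ sF, g t • uact (π t.2.1) (ψ t.2.2) with hT
  have hTV₀ : T ∈ V₀ := by
    have h := hsplit
    rw [hTeq] at h
    have hTneg : T = -(∑ t ∈ s'.filter (fun t => ¬ t.1 = j₀),
        g t • uact (δ ^ (t.1 - j₀)) (uact (π t.2.1) (ψ t.2.2))) :=
      eq_neg_of_add_eq_zero_left h
    rw [hTneg]
    exact neg_mem hlow
  -- apply (I - P)
  have hTP : T - P T = 0 := by rw [hPfix T hTV₀, sub_self]
  have hkey : ∑ t ∈ sF, g t • uact (π t.2.1) (ψ t.2.2 - P (ψ t.2.2)) = 0 := by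
    have hPT : P T = ∑ t ∈ sF, g t • uact (π t.2.1) (P (ψ t.2.2)) := by
      rw [hT, map_sum]
      apply Finset.sum_congr rfl
      intro t _
      rw [map_smul, hPcomm]
    calc ∑ t ∈ sF, g t • uact (π t.2.1) (ψ t.2.2 - P (ψ t.2.2))
        = ∑ t ∈ sF, (g t • uact (π t.2.1) (ψ t.2.2) - g t • uact (π t.2.1) (P (ψ t.2.2))) := by
          apply Finset.sum_congr rfl
          intro t _
          rw [← smul_sub]
          congr 1
          simp [uact, map_sub]
      _ = T - P T := by rw [Finset.sum_sub_distrib, hT, hPT]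
      _ = 0 := hTP
  -- reindex over Γ × Fin n
  have hinj : Set.InjOn Prod.snd (sF : Set (ℤ × Γ × Fin n)) := by
    intro a ha b hb hab
    have ha1 : a.1 = j₀ := (Finset.mem_filter.mp ha).2
    have hb1 : b.1 = j₀ := (Finset.mem_filter.mp hb).2
    exact Prod.ext (ha1.trans hb1.symm) hab
  set g'' : Γ × Fin n → ℂ := fun q => g (j₀, q) with hg''
  have himg : ∑ q ∈ sF.image Prod.snd, g'' q • uact (π q.1) (ψ q.2 - P (ψ q.2)) = 0 := by
    rw [Finset.sum_image (fun a ha b hb => hinj ha hb), ← hkey]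
    apply Finset.sum_congr rfl
    intro t ht
    have htj : t.1 = j₀ := (Finset.mem_filter.mp ht).2
    have : (j₀, t.2) = t := Prod.ext htj.symm rfl
    rw [hg'']
    simp only [this]
  have hzero := linearIndependent_iff'.mp hind (sF.image Prod.snd) g'' himg
  have ht₁F : t₁ ∈ sF := Finset.mem_filter.mpr ⟨ht₁, ht₁j⟩
  have hzval : g (j₀, t₁.2) = 0 := hzero t₁.2 (Finset.mem_image_of_mem _ ht₁F)
  have ht₁eq : (j₀, t₁.2) = t₁ := Prod.ext ht₁j.symm rfl
  rw [ht₁eq] at hzval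
  exact hg' t₁ ht₁ hzval
end
end

section
/- Let ε > 0 and let g : ℝ → ℂ be the function g = 1_{[−1/4,−1/8]∪[1/8,1/4]} + ε·1_{[−1/2,−1/4]∪[1/4,3/4]} (indicator functions), and let ψ ∈ L²(ℝ) be its inverse Fourier transform, ψ(x) = ∫_ℝ g(ξ) e^{2πiξx} dξ, so that ψ̂ = g. Then the dyadic wavelet system ((j,k) ↦ 2^{j/2} ψ(2^j x − k)) indexed by (j,k) ∈ ℤ × ℤ is linearly independent in L²(ℝ). -/
open MeasureTheory

noncomputable section

namespace Stmt17Aux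

open Complex FourierTransform

/-- The unimodular character `r ↦ e^{ir}`. -/
def eI (r : ℝ) : ℂ := Complex.exp ((r : ℂ) * Complex.I)

lemma norm_eI (r : ℝ) : ‖eI r‖ = 1 := by
  simp [eI, Complex.norm_exp]

lemma eI_ne_zero (r : ℝ) : eI r ≠ 0 := Complex.exp_ne_zero _

lemma eI_mul_eI (r s : ℝ) : eI r * eI s = eI (r + s) := by
  rw [eI, eI, eI, ← Complex.exp_add]
  push_cast
  ring_nf

lemma continuous_eI : Continuous eI := by
  unfold eI; fun_prop

lemma meas_eI {f : ℝ → ℝ} (hf : Measurable f) :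
    AEStronglyMeasurable (fun x => eI (f x)) volume :=
  (continuous_eI.measurable.comp hf).aestronglyMeasurable

/-- Fourier side of `2^{j/2} ψ(2^j x − k)`. -/
def W (g : ℝ → ℂ) (j k : ℤ) (η : ℝ) : ℂ :=
  eI (-(2 * Real.pi * ((2:ℝ) ^ (-j) * η) * (k : ℝ))) *
    ((((2:ℝ) ^ (-(j:ℝ)/2) : ℝ) : ℂ) * g ((2:ℝ) ^ (-j) * η))

section G

variable {ε : ℝ} {g : ℝ → ℂ}

def hgP (ε : ℝ) (g : ℝ → ℂ) : Prop := ∀ ξ : ℝ, g ξ =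
      Set.indicator (Set.Icc (-(1/4 : ℝ)) (-(1/8 : ℝ)) ∪ Set.Icc (1/8 : ℝ) (1/4 : ℝ))
        (fun _ => (1 : ℂ)) ξ
      + (ε : ℂ) * Set.indicator (Set.Icc (-(1/2 : ℝ)) (-(1/4 : ℝ)) ∪ Set.Icc (1/4 : ℝ) (3/4 : ℝ))
        (fun _ => (1 : ℂ)) ξ

lemma g_int (hg : hgP ε g) : Integrable g := by
  have : g = fun ξ =>
      Set.indicator (Set.Icc (-(1/4 : ℝ)) (-(1/8 : ℝ)) ∪ Set.Icc (1/8 : ℝ) (1/4 : ℝ))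
        (fun _ => (1 : ℂ)) ξ
      + (ε : ℂ) * Set.indicator (Set.Icc (-(1/2 : ℝ)) (-(1/4 : ℝ)) ∪ Set.Icc (1/4 : ℝ) (3/4 : ℝ))
        (fun _ => (1 : ℂ)) ξ := funext hg
  rw [this]
  apply Integrable.add
  · rw [integrable_indicator_iff (by measurability)]
    exact integrableOn_const ((measure_union_le _ _).trans_lt (by simp [Real.volume_Icc])).ne
  · simp_rw [← Set.indicator_const_mul]
    rw [integrable_indicator_iff (by measurability)]
    exact integrableOn_const ((measure_union_le _ _).trans_lt (by simp [Real.volume_Icc])).ne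

lemma g_zero (hg : hgP ε g) {ξ : ℝ} (hξ : 3/4 < ξ) : g ξ = 0 := by
  rw [hg ξ, Set.indicator_of_notMem, Set.indicator_of_notMem, mul_zero, add_zero]
  · rintro (h | h) <;> (simp only [Set.mem_Icc] at h; linarith [h.1, h.2])
  · rintro (h | h) <;> (simp only [Set.mem_Icc] at h; linarith [h.1, h.2])

lemma g_eps (hg : hgP ε g) {ξ : ℝ} (h1 : 1/2 < ξ) (h2 : ξ < 3/4) : g ξ = (ε : ℂ) := by
  rw [hg ξ, Set.indicator_of_notMem, Set.indicator_of_mem, mul_one, zero_add]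
  · right; constructor <;> linarith
  · rintro (h | h) <;> (simp only [Set.mem_Icc] at h; linarith [h.1, h.2])

lemma g_meas (hg : hgP ε g) : AEStronglyMeasurable g volume := by
  have : g = fun ξ =>
      Set.indicator (Set.Icc (-(1/4 : ℝ)) (-(1/8 : ℝ)) ∪ Set.Icc (1/8 : ℝ) (1/4 : ℝ))
        (fun _ => (1 : ℂ)) ξ
      + (ε : ℂ) * Set.indicator (Set.Icc (-(1/2 : ℝ)) (-(1/4 : ℝ)) ∪ Set.Icc (1/4 : ℝ) (3/4 : ℝ))
        (fun _ => (1 : ℂ)) ξ := funext hg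
  rw [this]
  apply Measurable.aestronglyMeasurable
  measurability

lemma zpow_pos' (m : ℤ) : (0:ℝ) < (2:ℝ) ^ m := zpow_pos (by norm_num) m

lemma zpow_ne' (m : ℤ) : ((2:ℝ) ^ m : ℝ) ≠ 0 := (zpow_pos' m).ne'

lemma W_integrable (hg : hgP ε g) (j k : ℤ) : Integrable (W g j k) := by
  apply Integrable.bdd_mul (c := 1)
  · exact ((g_int hg).comp_mul_left' (zpow_ne' (-j))).const_mul _
  · exact meas_eI (by fun_prop)
  · exact Filter.Eventually.of_forall (fun x => le_of_eq (norm_eI _))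

lemma W_mul_eI_integrable (hg : hgP ε g) (j k : ℤ) (x : ℝ) :
    Integrable (fun η => W g j k η * eI (2 * Real.pi * (η * x))) := by
  have : (fun η => W g j k η * eI (2 * Real.pi * (η * x)))
      = fun η => eI (2 * Real.pi * (η * x)) * W g j k η := by
    funext η; ring
  rw [this]
  apply Integrable.bdd_mul (c := 1) (W_integrable hg j k)
  · exact meas_eI (by fun_prop)
  · exact Filter.Eventually.of_forall (fun x => le_of_eq (norm_eI _))

lemma exp_combine (c G A B₁ B₂ : ℂ) (h : A = B₁ + B₂) :
    c * (G * Complex.exp A) = Complex.exp B₁ * (c * G) * Complex.exp B₂ := by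
  rw [h, Complex.exp_add]; ring

/-- Key scaling identity. -/
lemma key {ψ : ℝ → ℂ}
    (hψ : ∀ x : ℝ, ψ x = ∫ ξ : ℝ, g ξ *
      Complex.exp (2 * (Real.pi : ℂ) * Complex.I * (ξ : ℂ) * (x : ℂ)))
    (j k : ℤ) (x : ℝ) :
    (((2 : ℝ) ^ ((j : ℝ) / 2) : ℝ) : ℂ) * ψ ((2 : ℝ) ^ j * x - (k : ℝ)) =
      ∫ η : ℝ, W g j k η * eI (2 * Real.pi * (η * x)) := by
  rw [hψ]
  set f : ℝ → ℂ := fun ξ => g ξ *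
      Complex.exp (2 * (Real.pi : ℂ) * Complex.I * (ξ : ℂ) * (((2 : ℝ) ^ j * x - (k : ℝ) : ℝ) : ℂ))
    with hf
  have hscale : (∫ t : ℝ, f ((2:ℝ) ^ (-j) * t)) = |((2:ℝ) ^ (-j))⁻¹| • ∫ y : ℝ, f y :=
    MeasureTheory.Measure.integral_comp_mul_left f _
  have habs : |((2:ℝ) ^ (-j))⁻¹| = (2:ℝ) ^ j := by
    rw [abs_of_pos (inv_pos.2 (zpow_pos' _)), ← zpow_neg, neg_neg]
  rw [habs] at hscale
  have h1 : (∫ y : ℝ, f y) = ((2:ℝ) ^ (-j) : ℝ) • ∫ t : ℝ, f ((2:ℝ) ^ (-j) * t) := by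
    rw [hscale, smul_smul, ← zpow_add₀ (by norm_num : (2:ℝ) ≠ 0)]
    simp
  rw [h1, Complex.real_smul, ← MeasureTheory.integral_const_mul, ← MeasureTheory.integral_const_mul]
  congr 1
  funext t
  rw [hf]
  simp only []
  -- combine the real powers
  have hpow : (((2 : ℝ) ^ ((j : ℝ) / 2) : ℝ) : ℂ) * (((2:ℝ) ^ (-j) : ℝ) : ℂ)
      = (((2:ℝ) ^ (-(j:ℝ)/2) : ℝ) : ℂ) := by
    rw [← Complex.ofReal_mul]
    congr 1
    rw [show ((2:ℝ) ^ (-j) : ℝ) = (2:ℝ) ^ ((-j : ℤ) : ℝ) from (Real.rpow_intCast 2 (-j)).symm,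
      ← Real.rpow_add (by norm_num)]
    push_cast
    ring_nf
  have hzc : ((2:ℂ) ^ (-j)) * ((2:ℂ) ^ j) = 1 := by
    rw [← zpow_add₀ (by norm_num : (2:ℂ) ≠ 0)]
    simp
  rw [W, eI, eI]
  rw [← mul_assoc, hpow]
  push_cast
  apply exp_combine
  linear_combination (2 * (Real.pi : ℂ) * Complex.I * (t:ℂ) * (x:ℂ)) * hzc

end G

/-- A trigonometric polynomial vanishing on an interval has zero coefficients. -/
lemma trig_poly (T : Finset (ℤ × ℤ)) (c : ℤ × ℤ → ℂ)
    (hfst : ∀ p ∈ T, ∀ q ∈ T, p.1 = q.1)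
    (h : ∀ t ∈ Set.Ioo (1/2 : ℝ) (3/4 : ℝ),
      ∑ p ∈ T, c p * eI (-(2 * Real.pi * t * (p.2 : ℝ))) = 0) :
    ∀ p ∈ T, c p = 0 := by
  classical
  set M : ℕ := T.sup fun p => (-p.2).toNat with hM
  have hMe : ∀ p ∈ T, ((p.2 + M).toNat : ℤ) = p.2 + M := by
    intro p hp
    refine Int.toNat_of_nonneg ?_
    have h1 : ((-p.2).toNat : ℤ) ≤ (M : ℤ) := by
      exact_mod_cast Finset.le_sup (f := fun p => (-p.2).toNat) hp
    have h2 : -p.2 ≤ ((-p.2).toNat : ℤ) := Int.self_le_toNat _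
    omega
  set Q : Polynomial ℂ := ∑ p ∈ T, Polynomial.C (c p) * Polynomial.X ^ (p.2 + M).toNat with hQ
  have heval : ∀ t ∈ Set.Ioo (1/2 : ℝ) (3/4 : ℝ), Q.IsRoot (eI (-(2 * Real.pi * t))) := by
    intro t ht
    set z : ℂ := eI (-(2 * Real.pi * t)) with hz
    have hzne : z ≠ 0 := eI_ne_zero _
    have hzpow : ∀ p ∈ T, z ^ (p.2 + M).toNat = z ^ p.2 * z ^ (M : ℤ) := by
      intro p hp
      rw [← zpow_natCast z, hMe p hp, zpow_add₀ hzne]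
    have hchar : ∀ k : ℤ, eI (-(2 * Real.pi * t * (k : ℝ))) = z ^ k := by
      intro k
      rw [hz, eI, eI, ← Complex.exp_int_mul]
      congr 1
      push_cast
      ring
    rw [Polynomial.IsRoot, Polynomial.eval_finset_sum]
    have : ∀ p ∈ T, Polynomial.eval z (Polynomial.C (c p) * Polynomial.X ^ (p.2 + M).toNat)
        = (c p * eI (-(2 * Real.pi * t * (p.2 : ℝ)))) * z ^ (M : ℤ) := by
      intro p hp
      rw [Polynomial.eval_mul, Polynomial.eval_C, Polynomial.eval_pow, Polynomial.eval_X,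
        hzpow p hp, hchar]
      ring
    rw [Finset.sum_congr rfl this, ← Finset.sum_mul, h t ht, zero_mul]
  have hQ0 : Q = 0 := by
    apply Polynomial.eq_zero_of_infinite_isRoot
    apply Set.Infinite.mono (s := (fun t : ℝ => eI (-(2 * Real.pi * t))) '' Set.Ioo (1/2) (3/4))
    · rintro x ⟨t, ht, rfl⟩
      exact heval t ht
    · apply Set.Infinite.image ?_ (Set.Ioo_infinite (by norm_num))
      intro t₁ h₁ t₂ h₂ he
      simp only [eI, Complex.exp_eq_exp_iff_exists_int] at he
      obtain ⟨n, hn⟩ := he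
      have h2pii : (2 * (Real.pi : ℂ) * Complex.I) ≠ 0 := by
        simp [Real.pi_ne_zero, Complex.I_ne_zero]
      have key : (2 * (Real.pi : ℂ) * Complex.I) * (((t₂ - t₁ : ℝ) : ℂ) - (n : ℂ)) = 0 := by
        push_cast at hn ⊢
        linear_combination hn
      have h0 : (((t₂ - t₁ : ℝ) : ℂ) - (n : ℂ)) = 0 := by
        rcases mul_eq_zero.1 key with h | h
        · exact absurd h h2pii
        · exact h
      have h0' : (t₂ - t₁) - (n : ℝ) = 0 := by exact_mod_cast h0
      have habs : |(n : ℝ)| < 1 := by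
        rw [abs_lt]
        cases' h₁ with h₁a h₁b
        cases' h₂ with h₂a h₂b
        constructor <;> linarith
      have hn0 : n = 0 := by
        have h1 : ((|n| : ℤ) : ℝ) < 1 := by rwa [Int.cast_abs]
        have h2 : |n| < 1 := by exact_mod_cast h1
        rw [abs_lt] at h2
        omega
      rw [hn0] at h0'
      simp at h0'
      linarith
  intro p hp
  have hcoeff := congrArg (fun q : Polynomial ℂ => q.coeff ((p.2 + M).toNat)) hQ0
  simp only [hQ, Polynomial.finset_sum_coeff, Polynomial.coeff_zero] at hcoeff
  rw [Finset.sum_eq_single p] at hcoeff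
  · simpa [Polynomial.coeff_C_mul, Polynomial.coeff_X_pow] using hcoeff
  · intro q hq hqp
    rw [Polynomial.coeff_C_mul, Polynomial.coeff_X_pow, if_neg, mul_zero]
    intro hEq
    apply hqp
    have : q.2 + M = p.2 + M := by
      rw [← hMe q hq, ← hMe p hp, hEq]
    have h2 : q.2 = p.2 := by omega
    have h1 : q.1 = p.1 := hfst q hq p hp
    exact Prod.ext h1 h2
  · intro hpT
    exact absurd hp hpT

section Main

variable {ε : ℝ} {g ψ : ℝ → ℂ}

lemma fourierIntegralInv_expand (f : ℝ → ℂ) (x : ℝ) :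
    𝓕⁻ f x = ∫ v : ℝ, Complex.exp (((2 * Real.pi * (v * x) : ℝ) : ℂ) * Complex.I) • f v := by
  rw [Real.fourierInv_eq']
  norm_num [RCLike.inner_apply, conj_trivial]
  simp_rw [mul_comm (x : ℂ)]

lemma top_scale (hε : 0 < ε) (hg : hgP ε g)
    (hψ : ∀ x : ℝ, ψ x = ∫ ξ : ℝ, g ξ *
      Complex.exp (2 * (Real.pi : ℂ) * Complex.I * (ξ : ℂ) * (x : ℂ)))
    (s : Finset (ℤ × ℤ)) (coeff : ℤ × ℤ → ℂ)
    (hae : ∀ᵐ x ∂(volume : Measure ℝ),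
        ∑ p ∈ s, coeff p * (((2 : ℝ) ^ ((p.1 : ℝ) / 2) : ℝ) : ℂ) *
          ψ ((2 : ℝ) ^ p.1 * x - (p.2 : ℝ)) = 0)
    (j₀ : ℤ) (hj₀ : ∀ p ∈ s, p.1 ≤ j₀) :
    ∀ p ∈ s, p.1 = j₀ → coeff p = 0 := by
  classical
  set G : ℝ → ℂ := fun η => ∑ p ∈ s, coeff p * W g p.1 p.2 η with hGdef
  have hGint : Integrable G :=
    integrable_finset_sum _ (fun p _ => (W_integrable hg p.1 p.2).const_mul (coeff p))
  -- the inverse Fourier transform of G is the wavelet sum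
  have hFeq : ∀ x : ℝ, 𝓕⁻ G x = ∑ p ∈ s, coeff p * (((2 : ℝ) ^ ((p.1 : ℝ) / 2) : ℝ) : ℂ) *
      ψ ((2 : ℝ) ^ p.1 * x - (p.2 : ℝ)) := by
    intro x
    have e1 : 𝓕⁻ G x = ∫ η : ℝ, ∑ p ∈ s, coeff p * (W g p.1 p.2 η * eI (2 * Real.pi * (η * x))) := by
      rw [fourierIntegralInv_expand]
      congr 1
      funext η
      rw [smul_eq_mul,
        show Complex.exp (((2 * Real.pi * (η * x) : ℝ) : ℂ) * Complex.I)
          = eI (2 * Real.pi * (η * x)) from rfl, hGdef]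
      rw [Finset.mul_sum]
      apply Finset.sum_congr rfl
      intro p _
      ring
    rw [e1, integral_finset_sum _ (fun p _ => ((W_mul_eI_integrable hg p.1 p.2 x).const_mul _))]
    apply Finset.sum_congr rfl
    intro p _
    rw [integral_const_mul, ← key hψ p.1 p.2 x]
    ring
  -- 𝓕⁻ G is continuous and a.e. zero, hence zero
  have hcont : Continuous (𝓕⁻ G) := by
    apply VectorFourier.fourierIntegral_continuous Real.continuous_fourierChar ?_ hGint
    exact continuous_inner.neg
  have hF0 : 𝓕⁻ G = fun _ => (0 : ℂ) := by
    rw [← Continuous.ae_eq_iff_eq (μ := volume) hcont continuous_const]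
    filter_upwards [hae] with x hx
    rw [hFeq x]
    exact hx
  have hFT0 : 𝓕 G = fun _ => (0 : ℂ) := by
    funext w
    have h1 : 𝓕 G w = 𝓕⁻ G (-w) := by
      rw [Real.fourierInv_eq_fourier_neg]; simp
    rw [h1, hF0]
  have hFT0int : Integrable (𝓕 G) := by rw [hFT0]; exact integrable_zero _ _ _
  -- zpow arithmetic
  have two_ne : (2:ℝ) ≠ 0 := by norm_num
  have c1 : (2:ℝ) ^ (-j₀) * (2:ℝ) ^ (j₀ - 1) = 1/2 := by
    rw [← zpow_add₀ two_ne, show -j₀ + (j₀ - 1) = -1 by ring]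
    norm_num
  have c2 : (2:ℝ) ^ (-j₀) * (3 * (2:ℝ) ^ (j₀ - 2)) = 3/4 := by
    rw [show (2:ℝ) ^ (-j₀) * (3 * (2:ℝ) ^ (j₀ - 2)) = 3 * ((2:ℝ) ^ (-j₀) * (2:ℝ) ^ (j₀-2)) by ring,
      ← zpow_add₀ two_ne, show -j₀ + (j₀ - 2) = -2 by ring]
    norm_num
  set T : Finset (ℤ × ℤ) := s.filter (fun p => p.1 = j₀) with hT
  set C : ℂ := (((2:ℝ) ^ (-(j₀:ℝ)/2) : ℝ) : ℂ) * (ε : ℂ) with hC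
  set H : ℝ → ℂ := fun η => ∑ p ∈ T,
    coeff p * (eI (-(2 * Real.pi * ((2:ℝ) ^ (-j₀) * η) * (p.2 : ℝ))) * C) with hH
  -- G agrees with H on the top-scale window
  have hGH : ∀ η ∈ Set.Ioo ((2:ℝ) ^ (j₀ - 1)) (3 * (2:ℝ) ^ (j₀ - 2)), G η = H η := by
    rintro η ⟨hη1, hη2⟩
    rw [hGdef]
    simp only []
    rw [← Finset.sum_filter_add_sum_filter_not s (fun p => p.1 = j₀)]
    have hz : ∑ p ∈ s.filter (fun p => ¬ p.1 = j₀), coeff p * W g p.1 p.2 η = 0 := by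
      apply Finset.sum_eq_zero
      intro p hp
      simp only [Finset.mem_filter] at hp
      have hlt : p.1 < j₀ := lt_of_le_of_ne (hj₀ p hp.1) hp.2
      have e1 : (1:ℝ) ≤ (2:ℝ) ^ (-p.1) * (2:ℝ) ^ (j₀ - 1) := by
        rw [← zpow_add₀ two_ne]
        have hm : (0:ℤ) ≤ -p.1 + (j₀ - 1) := by omega
        calc (1:ℝ) = (2:ℝ) ^ (0:ℤ) := by norm_num
        _ ≤ (2:ℝ) ^ (-p.1 + (j₀ - 1)) := by
          apply zpow_le_zpow_right₀ (by norm_num) hm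
      have e2 : (3:ℝ)/4 < (2:ℝ) ^ (-p.1) * η := by
        have := mul_lt_mul_of_pos_left hη1 (zpow_pos' (-p.1))
        linarith
      rw [W, g_zero hg e2]
      ring
    rw [hz, add_zero]
    apply Finset.sum_congr rfl
    intro p hp
    simp only [Finset.mem_filter] at hp
    have hp2 := hp.2
    congr 1
    rw [show p.1 = j₀ from hp2, W]
    have e3 : 1/2 < (2:ℝ) ^ (-j₀) * η := by
      have := mul_lt_mul_of_pos_left hη1 (zpow_pos' (-j₀))
      linarith [c1]
    have e4 : (2:ℝ) ^ (-j₀) * η < 3/4 := by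
      have := mul_lt_mul_of_pos_left hη2 (zpow_pos' (-j₀))
      linarith [c2]
    rw [g_eps hg e3 e4, hC]
  have Hcont : Continuous H := by
    rw [hH]
    apply continuous_finset_sum
    intro p _
    apply Continuous.mul continuous_const
    apply Continuous.mul ?_ continuous_const
    exact continuous_eI.comp (by fun_prop)
  have hG0 : ∀ η ∈ Set.Ioo ((2:ℝ) ^ (j₀ - 1)) (3 * (2:ℝ) ^ (j₀ - 2)), G η = 0 := by
    intro η hη
    have hGcont : ContinuousAt G η := by
      apply Hcont.continuousAt.congr
      exact Filter.eventuallyEq_of_mem (isOpen_Ioo.mem_nhds hη) (fun y hy => (hGH y hy).symm)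
    have hinv := hGint.fourier_fourierInv_eq hFT0int hGcont
    rw [← hinv, hF0]
    simp only [Real.fourier_eq, smul_zero, integral_zero]
  -- the trigonometric polynomial vanishes on (1/2, 3/4)
  have hH0 : ∀ t ∈ Set.Ioo (1/2 : ℝ) (3/4 : ℝ),
      ∑ p ∈ T, (coeff p * C) * eI (-(2 * Real.pi * t * (p.2 : ℝ))) = 0 := by
    intro t ht
    obtain ⟨ht1, ht2⟩ := ht
    have c3 : (2:ℝ) ^ (j₀ - 1) = (2:ℝ) ^ j₀ * (1/2) := by
      rw [show (j₀ - 1) = j₀ + (-1) by ring, zpow_add₀ two_ne]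
      norm_num
    have c4 : 3 * (2:ℝ) ^ (j₀ - 2) = (2:ℝ) ^ j₀ * (3/4) := by
      rw [show (j₀ - 2) = j₀ + (-2) by ring, zpow_add₀ two_ne]
      norm_num
      ring
    have hmem : (2:ℝ) ^ j₀ * t ∈ Set.Ioo ((2:ℝ) ^ (j₀ - 1)) (3 * (2:ℝ) ^ (j₀ - 2)) := by
      constructor
      · rw [c3]; exact mul_lt_mul_of_pos_left ht1 (zpow_pos' j₀)
      · rw [c4]; exact mul_lt_mul_of_pos_left ht2 (zpow_pos' j₀)
    have h0 := hG0 _ hmem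
    rw [hGH _ hmem] at h0
    have h0' : ∑ p ∈ T, coeff p *
        (eI (-(2 * Real.pi * ((2:ℝ) ^ (-j₀) * ((2:ℝ) ^ j₀ * t)) * (p.2 : ℝ))) * C) = 0 := h0
    have hsimp : (2:ℝ) ^ (-j₀) * ((2:ℝ) ^ j₀ * t) = t := by
      rw [← mul_assoc, ← zpow_add₀ two_ne]
      simp
    rw [hsimp] at h0'
    rw [← h0']
    apply Finset.sum_congr rfl
    intro p _
    ring
  have hfstT : ∀ p ∈ T, ∀ q ∈ T, p.1 = q.1 := by
    intro p hp q hq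
    simp only [hT, Finset.mem_filter] at hp hq
    rw [hp.2, hq.2]
  have hCne : C ≠ 0 := by
    rw [hC]
    apply mul_ne_zero
    · exact_mod_cast (Real.rpow_pos_of_pos (by norm_num) _).ne'
    · exact_mod_cast hε.ne'
  have hfinal := trig_poly T (fun p => coeff p * C) hfstT hH0
  intro p hp hpj
  have hpT : p ∈ T := by simp only [hT, Finset.mem_filter]; exact ⟨hp, hpj⟩
  have := hfinal p hpT
  exact (mul_eq_zero.1 this).resolve_right hCne

end Main

end Stmt17Aux

theorem stmt17
    (ε : ℝ) (hε : 0 < ε)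
    -- `g = 1_{[-1/4,-1/8] ∪ [1/8,1/4]} + ε · 1_{[-1/2,-1/4] ∪ [1/4,3/4]}`
    (g : ℝ → ℂ)
    (hg : ∀ ξ : ℝ, g ξ =
      Set.indicator (Set.Icc (-(1/4 : ℝ)) (-(1/8 : ℝ)) ∪ Set.Icc (1/8 : ℝ) (1/4 : ℝ))
        (fun _ => (1 : ℂ)) ξ
      + (ε : ℂ) * Set.indicator (Set.Icc (-(1/2 : ℝ)) (-(1/4 : ℝ)) ∪ Set.Icc (1/4 : ℝ) (3/4 : ℝ))
        (fun _ => (1 : ℂ)) ξ)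
    -- `ψ` is the inverse Fourier transform of `g`
    (ψ : ℝ → ℂ)
    (hψ : ∀ x : ℝ, ψ x = ∫ ξ : ℝ, g ξ *
      Complex.exp (2 * (Real.pi : ℂ) * Complex.I * (ξ : ℂ) * (x : ℂ))) :
    -- the dyadic wavelet system `2^{j/2} ψ(2^j x - k)` is linearly independent in `L²(ℝ)`
    ∀ (s : Finset (ℤ × ℤ)) (coeff : ℤ × ℤ → ℂ),
      (∀ᵐ x ∂(volume : Measure ℝ),
        ∑ p ∈ s, coeff p * (((2 : ℝ) ^ ((p.1 : ℝ) / 2) : ℝ) : ℂ) *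
          ψ ((2 : ℝ) ^ p.1 * x - (p.2 : ℝ)) = 0) →
      ∀ p ∈ s, coeff p = 0 := by
  classical
  intro s coeff hae
  have hg' : Stmt17Aux.hgP ε g := hg
  have main : ∀ n : ℕ, ∀ t : Finset (ℤ × ℤ), t.card = n →
      (∀ᵐ x ∂(volume : Measure ℝ),
        ∑ p ∈ t, coeff p * (((2 : ℝ) ^ ((p.1 : ℝ) / 2) : ℝ) : ℂ) *
          ψ ((2 : ℝ) ^ p.1 * x - (p.2 : ℝ)) = 0) →
      ∀ p ∈ t, coeff p = 0 := by
    intro n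
    induction n using Nat.strong_induction_on with
    | _ n ih =>
      intro t hcard htae
      rcases Finset.eq_empty_or_nonempty t with rfl | hne
      · intro p hp
        exact absurd hp (Finset.notMem_empty p)
      · set j₀ : ℤ := (t.image Prod.fst).max' (hne.image _) with hj₀def
        have hj₀ : ∀ p ∈ t, p.1 ≤ j₀ :=
          fun p hp => Finset.le_max' _ _ (Finset.mem_image_of_mem _ hp)
        have htop := Stmt17Aux.top_scale hε hg' hψ t coeff htae j₀ hj₀
        obtain ⟨q, hqt, hqj⟩ : ∃ q ∈ t, q.1 = j₀ := by
          have hmem := (t.image Prod.fst).max'_mem (hne.image _)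
          rw [Finset.mem_image] at hmem
          obtain ⟨q, hq1, hq2⟩ := hmem
          exact ⟨q, hq1, hq2⟩
        set t' : Finset (ℤ × ℤ) := t.filter (fun p => ¬ p.1 = j₀) with ht'
        have hcard' : t'.card < n := by
          rw [← hcard]
          apply Finset.card_lt_card
          constructor
          · exact Finset.filter_subset _ _
          · intro hsub
            have := hsub hqt
            rw [ht', Finset.mem_filter] at this
            exact this.2 hqj
        have htae' : ∀ᵐ x ∂(volume : Measure ℝ),
            ∑ p ∈ t', coeff p * (((2 : ℝ) ^ ((p.1 : ℝ) / 2) : ℝ) : ℂ) *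
              ψ ((2 : ℝ) ^ p.1 * x - (p.2 : ℝ)) = 0 := by
          filter_upwards [htae] with x hx
          rw [← Finset.sum_filter_add_sum_filter_not t (fun p => p.1 = j₀)] at hx
          have hzero : ∑ p ∈ t.filter (fun p => p.1 = j₀),
              coeff p * (((2 : ℝ) ^ ((p.1 : ℝ) / 2) : ℝ) : ℂ) *
                ψ ((2 : ℝ) ^ p.1 * x - (p.2 : ℝ)) = 0 := by
            apply Finset.sum_eq_zero
            intro p hp
            rw [Finset.mem_filter] at hp
            rw [htop p hp.1 hp.2, zero_mul, zero_mul]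
          rw [hzero, zero_add] at hx
          exact hx
        have hrec := ih t'.card hcard' t' rfl htae'
        intro p hp
        by_cases hpj : p.1 = j₀
        · exact htop p hp hpj
        · exact hrec p (Finset.mem_filter.2 ⟨hp, hpj⟩)
  exact main s.card s rfl hae
end
end
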